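/- arXiv:1311.6367 — 5 statements merged into one kernel-verified Lean document; each statement's English description precedes it below -/
import Mathlib

section
/- Fix 0 < α < λ ≤ 1. For ν ∈ 𝒫(ℕ) (probability measures on the positive integers) define, for i,j ∈ ℕ: P_ν(i,1) = (λ ν({1})) ∨ α, and for j ≠ 1, P_ν(i,j) = ((λ ν({1,…,j}) − α) ∧ λ ν({j})) ∨ 0 + (1 − λ)·𝟙(j = i + 1). Then for every ν ∈ 𝒫(ℕ) and every i ∈ ℕ, the numbers P_ν(i,j) are nonnegative and Σ_{j=1}^∞ P_ν(i,j) = 1, i.e. P_ν is a well-defined Markov transition kernel on ℕ. -/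
/-- The transition probabilities of the counterexample nonlinear Markov chain on the
positive integers `ℕ+`: `P_ν(i,1) = (λ ν({1})) ∨ α` and, for `j ≠ 1`,
`P_ν(i,j) = ((λ ν({1,…,j}) − α) ∧ λ ν({j})) ∨ 0 + (1−λ)·𝟙(j = i+1)`. -/
noncomputable def pker (α lam : ℝ) (ν : ℕ+ → ℝ) (i j : ℕ+) : ℝ :=
  if j = 1 then max (lam * ν 1) α
  else max (min (lam * ∑ k ∈ Finset.Iic j, ν k - α) (lam * ν j)) 0
    + (if j = i + 1 then 1 - lam else 0)

lemma key_real (α a b : ℝ) (hb : 0 ≤ b) :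
    max (min (a + b - α) b) 0 = max (a + b) α - max a α := by
  rcases le_total α a with h | h <;> rcases le_total (a + b - α) b with h2 | h2 <;>
    rcases le_total (a + b) α with h3 | h3 <;>
  simp [max_def, min_def, *] <;> try linarith

lemma Iic_pnat (j : ℕ+) :
    Finset.Iic j = Finset.map ⟨Nat.succPNat, Nat.succPNat_injective⟩ (Finset.range j) := by
  ext k
  simp only [Finset.mem_Iic, Finset.mem_map, Finset.mem_range, Function.Embedding.coeFn_mk]
  constructor
  · intro h
    refine ⟨k.natPred, ?_, k.succPNat_natPred⟩
    have h1 : k.natPred + 1 = (k:ℕ) := k.natPred_add_one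
    have := (PNat.coe_le_coe k j).2 h
    omega
  · rintro ⟨m, hm, rfl⟩
    exact (PNat.coe_le_coe _ _).1 (by simpa [Nat.succPNat] using hm)

/-- For `0 < α < lam ≤ 1` and any probability mass function `ν` on `ℕ+`, the numbers
`P_ν(i,j)` are nonnegative and each row sums to `1`, i.e. `P_ν` is a well-defined Markov
transition kernel on the positive integers. -/
theorem stmt12 (α lam : ℝ) (hα0 : 0 < α) (hαlam : α < lam) (hlam1 : lam ≤ 1)
    (ν : ℕ+ → ℝ) (hν0 : ∀ k, 0 ≤ ν k) (hνsum : Summable ν) (hν1 : ∑' k, ν k = 1) :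
    (∀ i j : ℕ+, 0 ≤ pker α lam ν i j) ∧ (∀ i : ℕ+, ∑' j, pker α lam ν i j = 1) := by
  constructor
  · intro i j
    unfold pker
    split
    · exact le_trans hα0.le (le_max_right _ _)
    · refine add_nonneg (le_max_right _ _) ?_
      split <;> linarith
  · intro i
    set ν' : ℕ → ℝ := fun m => ν m.succPNat with hν'
    have hν'0 : ∀ m, 0 ≤ ν' m := fun m => hν0 _
    have hsum' : HasSum ν' 1 := by
      refine (Equiv.pnatEquivNat.symm.hasSum_iff).2 ?_
      rw [← hν1]; exact hνsum.hasSum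
    set F : ℕ → ℝ := fun n => ∑ m ∈ Finset.range n, ν' m with hF
    have hIic : ∀ j : ℕ+, ∑ k ∈ Finset.Iic j, ν k = F j := by
      intro j
      rw [Iic_pnat, Finset.sum_map]
      rfl
    have hFmono : Monotone F := by
      intro a b hab
      exact Finset.sum_le_sum_of_subset_of_nonneg (Finset.range_subset_range.2 hab)
        (fun m _ _ => hν'0 m)
    set g : ℕ → ℝ := fun n => max (lam * F (n + 1)) α with hg
    have hlam0 : 0 < lam := hα0.trans hαlam
    have hgmono : Monotone g := by
      intro a b hab
      exact max_le_max (mul_le_mul_of_nonneg_left (hFmono (by omega)) hlam0.le) le_rfl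
    have htendg : Filter.Tendsto g Filter.atTop (nhds lam) := by
      have h1 : Filter.Tendsto (fun n => F (n + 1)) Filter.atTop (nhds 1) :=
        hsum'.tendsto_sum_nat.comp (Filter.tendsto_add_atTop_nat 1)
      have h2 : Filter.Tendsto (fun n => lam * F (n + 1)) Filter.atTop (nhds lam) := by
        have := (tendsto_const_nhds (x := lam)).mul h1
        simpa using this
      have := h2.max (tendsto_const_nhds (x := α))
      rwa [max_eq_left hαlam.le] at this
    set d : ℕ → ℝ := fun n => if n = 0 then g 0 else g n - g (n - 1) with hd
    have hd0 : ∀ n, 0 ≤ d n := by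
      intro n
      simp only [hd]
      split
      · exact le_trans hα0.le (le_max_right _ _)
      · simp only [sub_nonneg]; exact hgmono (by omega)
    have hpartial : ∀ N, ∑ m ∈ Finset.range (N + 1), d m = g N := by
      intro N
      induction N with
      | zero => simp [hd]
      | succ n ih =>
        rw [Finset.sum_range_succ, ih]
        simp [hd]
    have hdsum : HasSum d lam := by
      rw [hasSum_iff_tendsto_nat_of_nonneg hd0]
      rw [← Filter.tendsto_add_atTop_iff_nat 1]
      simpa only [hpartial] using htendg
    have hindsum : HasSum (fun n : ℕ => if n = (i : ℕ) then 1 - lam else 0) (1 - lam) :=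
      hasSum_ite_eq (i : ℕ) (1 - lam)
    have hiff : ∀ n : ℕ, (n.succPNat = i + 1) ↔ (n = (i : ℕ)) := by
      intro n
      rw [PNat.add_one, Nat.succPNat_inj]
    have hfd : ∀ n : ℕ, pker α lam ν i n.succPNat
        = d n + (if n = (i : ℕ) then 1 - lam else 0) := by
      intro n
      cases n with
      | zero =>
        have hi0 : (0 : ℕ) ≠ (i : ℕ) := by have := i.pos; omega
        simp only [pker, Nat.succPNat, hd]
        norm_num [hi0]
        have : F 1 = ν 1 := by simp [hF, hν']; rfl
        simp [hg, this]
      | succ m =>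
        have hne : (m + 1).succPNat ≠ 1 := by
          intro h
          have : ((m + 1).succPNat : ℕ) = 1 := by rw [h]; rfl
          simp [Nat.succPNat] at this
        have hstep : F (m + 2) = F (m + 1) + ν' (m + 1) := Finset.sum_range_succ _ _
        have hνval : ν (m + 1).succPNat = ν' (m + 1) := rfl
        rw [pker, if_neg hne, hIic, hνval]
        have hcoe : ((m + 1).succPNat : ℕ) = m + 2 := rfl
        have hFc : F ((m + 1).succPNat : ℕ) = F (m + 2) := by rw [hcoe]
        rw [hFc, hstep, mul_add]
        rw [key_real α (lam * F (m + 1)) (lam * ν' (m + 1))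
          (mul_nonneg hlam0.le (hν'0 _))]
        simp only [hiff]
        have : d (m + 1) = g (m + 1) - g m := by simp [hd]
        rw [this]
        simp only [hg]
        rw [hstep, mul_add]
    have hfsum : HasSum (fun n : ℕ => pker α lam ν i n.succPNat) 1 := by
      have := hdsum.add hindsum
      rw [show lam + (1 - lam) = 1 by ring] at this
      have heq : (fun n : ℕ => pker α lam ν i n.succPNat)
          = fun n => d n + (if n = (i : ℕ) then 1 - lam else 0) := funext hfd
      rw [heq]; exact this
    have : HasSum (pker α lam ν i) 1 :=
      (Equiv.pnatEquivNat.symm.hasSum_iff).1 hfsum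
    exact this.tsum_eq
end

section
/- Fix 0 < α < λ ≤ 1 and consider the nonlinear Markov transition kernel on ℕ defined by P_ν(i,1) = (λ ν({1})) ∨ α and, for j ≠ 1, P_ν(i,j) = ((λ ν({1,…,j}) − α) ∧ λ ν({j})) ∨ 0 + (1 − λ)·𝟙(j = i + 1). Then for all i ∈ ℕ and all μ, ν ∈ 𝒫(ℕ), P_ν(i,1) ≥ α, and consequently the family satisfies the global nonlinear Dobrushin condition with constant α: d_TV(P_μ(i,·), P_ν(j,·)) ≤ 2(1 − α) for all i,j ∈ ℕ and μ,ν ∈ 𝒫(ℕ). -/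
open Filter Topology

lemma sum_Iic_eq (ν : ℕ+ → ℝ) (j : ℕ+) :
    ∑ k ∈ Finset.Iic j, ν k = ∑ n ∈ Finset.range (j : ℕ), ν n.succPNat := by
  refine Finset.sum_bij' (fun k _ => PNat.natPred k) (fun n _ => n.succPNat) ?_ ?_ ?_ ?_ ?_
  · intro a ha
    simp only [Finset.mem_Iic] at ha
    simp only [Finset.mem_range]
    have hj : ((j:ℕ)) = (j+1).natPred := rfl
    rw [hj, PNat.natPred_lt_natPred, PNat.lt_add_one_iff]
    exact ha
  · intro a ha
    simp only [Finset.mem_range] at ha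
    simp only [Finset.mem_Iic]
    rw [← PNat.coe_le_coe, Nat.succPNat_coe]
    omega
  · intro a ha; exact PNat.succPNat_natPred a
  · intro a ha; exact Nat.natPred_succPNat a
  · intro a ha; rw [PNat.succPNat_natPred]

lemma pker_nonneg (α lam : ℝ) (hα0 : 0 < α) (hlam1 : lam ≤ 1) (ν : ℕ+ → ℝ) (i j : ℕ+) :
    0 ≤ pker α lam ν i j := by
  unfold pker
  split
  · exact le_max_of_le_right hα0.le
  · have : (0:ℝ) ≤ if j = i + 1 then 1 - lam else 0 := by
      split <;> simp [hlam1]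
    have h2 : (0:ℝ) ≤ max (min (lam * ∑ k ∈ Finset.Iic j, ν k - α) (lam * ν j)) 0 :=
      le_max_right _ _
    linarith

lemma pker_hasSum (α lam : ℝ) (hα0 : 0 < α) (hαlam : α < lam) (hlam1 : lam ≤ 1)
    (ν : ℕ+ → ℝ) (hν : ∀ k, 0 ≤ ν k) (hs : Summable ν) (h1 : (∑' k, ν k) = 1) (i : ℕ+) :
    HasSum (fun k => pker α lam ν i k) 1 := by
  have hlam0 : 0 < lam := hα0.trans hαlam
  -- work on ℕ via succPNat
  set w : ℕ → ℝ := fun n => ν n.succPNat with hw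
  have hws : Summable w := by
    have := (Equiv.pnatEquivNat.symm.summable_iff (f := ν)).mpr hs
    have h' : Summable (ν ∘ Nat.succPNat) := by simpa [Equiv.pnatEquivNat] using this
    exact h'
  have hwt : (∑' n, w n) = 1 := by
    rw [← h1]
    have := Equiv.pnatEquivNat.symm.tsum_eq (f := ν)
    simpa [Equiv.pnatEquivNat, Function.comp] using this
  set s : ℕ → ℝ := fun n => ∑ k ∈ Finset.range n, w k with hsdef
  have hs_mono : Monotone s := by
    intro a b hab
    exact Finset.sum_le_sum_of_subset_of_nonneg (Finset.range_subset_range.mpr hab)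
      (fun k _ _ => hν _)
  have hs_tendsto : Tendsto s atTop (𝓝 1) := by
    have := hws.hasSum.tendsto_sum_nat
    rwa [hwt] at this
  set G : ℕ → ℝ := fun n => if n = 0 then 0 else max α (lam * s n) with hG
  have hG_mono : ∀ n, G n ≤ G (n+1) := by
    intro n
    simp only [hG]
    rcases Nat.eq_zero_or_pos n with h | h
    · subst h; simp [le_max_iff, hα0.le]
    · rw [if_neg h.ne', if_neg (Nat.succ_ne_zero n)]
      exact max_le_max le_rfl (by nlinarith [hs_mono (Nat.le_succ n)])
  have hG_tendsto : Tendsto G atTop (𝓝 lam) := by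
    have h2 : Tendsto (fun n => max α (lam * s n)) atTop (𝓝 (max α (lam * 1))) :=
      tendsto_const_nhds.max ((hs_tendsto.const_mul lam))
    rw [mul_one, max_eq_right hαlam.le] at h2
    apply h2.congr'
    filter_upwards [eventually_ge_atTop 1] with n hn
    simp only [hG]
    rw [if_neg (by omega)]
  -- the main part as a ℕ-indexed function
  have key : ∀ n : ℕ, pker α lam ν i n.succPNat
      = (G (n+1) - G n) + (if n = (i:ℕ) then 1 - lam else 0) := by
    intro n
    have hind : (if (n.succPNat : ℕ+) = i + 1 then (1:ℝ) - lam else 0)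
        = (if n = (i:ℕ) then 1 - lam else 0) := by
      congr 1
      simp only [eq_iff_iff]
      constructor
      · intro h
        have := congrArg (PNat.val) h
        simpa using this
      · intro h
        apply PNat.coe_injective
        simp [h]
    have hSn : ∑ k ∈ Finset.Iic (n.succPNat), ν k = s (n+1) := by
      rw [sum_Iic_eq]; simp [hsdef, hw]
    rcases Nat.eq_zero_or_pos n with h0 | hpos
    · subst h0
      have hni : ¬ ((0:ℕ) = (i:ℕ)) := i.pos.ne
      rw [if_neg hni, add_zero]
      have h01 : (Nat.succPNat 0) = 1 := rfl
      rw [h01]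
      have hG0 : G 0 = 0 := by simp [hG]
      have hG1 : G (0+1) = max α (lam * ν 1) := by
        have hs1 : s 1 = ν 1 := by
          simp only [hsdef, Finset.range_one, Finset.sum_singleton]
          rfl
        simp [hG, hs1]
      rw [hG1, hG0, sub_zero]
      show (if (1:ℕ+) = 1 then max (lam * ν 1) α
        else max (min (lam * ∑ k ∈ Finset.Iic 1, ν k - α) (lam * ν 1)) 0
          + (if (1:ℕ+) = i + 1 then 1 - lam else 0)) = max α (lam * ν 1)
      rw [if_pos rfl]
      exact max_comm _ _
    · have hne1 : n.succPNat ≠ 1 := by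
        intro h
        have := congrArg (PNat.val) h
        simp at this
        omega
      simp only [pker, if_neg hne1, hind, hSn]
      congr 1
      -- max (min (lam * s(n+1) - α) (lam * ν (succPNat n))) 0 = G (n+1) - G n
      have hν_eq : ν n.succPNat = s (n+1) - s n := by
        simp [hsdef, hw, Finset.sum_range_succ]
      rw [hν_eq]
      have hG1 : G (n+1) = max α (lam * s (n+1)) := by simp [hG]
      have hGn : G n = max α (lam * s n) := by simp [hG, hpos.ne']
      rw [hG1, hGn]
      have hle : lam * s n ≤ lam * s (n+1) := by
        nlinarith [hs_mono (Nat.le_succ n)]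
      rcases le_total (lam * s (n+1)) α with h | h
      · rw [max_eq_left h, max_eq_left (le_trans hle h), sub_self, mul_sub]
        apply max_eq_right
        apply min_le_of_left_le
        linarith
      · rw [max_eq_right h, mul_sub]
        rcases le_total (lam * s n) α with h2 | h2
        · rw [max_eq_left h2]
          rw [max_eq_left]
          · rw [min_eq_left (by linarith)]
          · rw [min_eq_left (by linarith)]; linarith
        · rw [max_eq_right h2]
          rw [max_eq_left]
          · rw [min_eq_right (by linarith)]
          · rw [min_eq_right (by linarith)]; linarith
  -- telescoping sum
  have hg : HasSum (fun n : ℕ => G (n+1) - G n) lam := by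
    rw [hasSum_iff_tendsto_nat_of_nonneg (fun n => by linarith [hG_mono n])]
    have : ∀ n, ∑ k ∈ Finset.range n, (G (k+1) - G k) = G n := by
      intro n
      rw [Finset.sum_range_sub]
      simp [hG]
    simp only [this]
    exact hG_tendsto
  have hh : HasSum (fun n : ℕ => if n = (i:ℕ) then (1:ℝ) - lam else 0) (1 - lam) := by
    convert hasSum_ite_eq (i:ℕ) ((1:ℝ) - lam) using 2
  have htot : HasSum (fun n : ℕ => pker α lam ν i n.succPNat) 1 := by
    have := hg.add hh
    rw [show lam + (1 - lam) = 1 by ring] at this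
    exact this.congr_fun key
  have := (Equiv.pnatEquivNat.symm.hasSum_iff (f := fun k => pker α lam ν i k) (a := 1)).mp ?_
  · exact this
  · have h' : HasSum ((fun k => pker α lam ν i k) ∘ Nat.succPNat) 1 := htot
    simpa [Equiv.pnatEquivNat] using h'

/-- For `0 < α < lam ≤ 1`, every row of the counterexample kernel puts mass at least `α`
on the state `1`; consequently the family satisfies the global nonlinear Dobrushin
condition with constant `α` (`d_TV` being `Σ_k |P_μ(i,k) − P_ν(j,k)|`). -/
theorem stmt13 (α lam : ℝ) (hα0 : 0 < α) (hαlam : α < lam) (hlam1 : lam ≤ 1) :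
    (∀ ν : ℕ+ → ℝ, (∀ k, 0 ≤ ν k) → Summable ν → (∑' k, ν k) = 1 →
      ∀ i : ℕ+, α ≤ pker α lam ν i 1) ∧
    (∀ μ ν : ℕ+ → ℝ, (∀ k, 0 ≤ μ k) → Summable μ → (∑' k, μ k) = 1 →
      (∀ k, 0 ≤ ν k) → Summable ν → (∑' k, ν k) = 1 →
      ∀ i j : ℕ+, ∑' k, |pker α lam μ i k - pker α lam ν j k| ≤ 2 * (1 - α)) := by
  constructor
  · intro ν _ _ _ i
    simp [pker]
  · intro μ ν hμ0 hμs hμ1 hν0 hνs hν1 i j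
    set a : ℕ+ → ℝ := fun k => pker α lam μ i k with ha
    set b : ℕ+ → ℝ := fun k => pker α lam ν j k with hb
    have hau : HasSum a 1 := pker_hasSum α lam hα0 hαlam hlam1 μ hμ0 hμs hμ1 i
    have hbu : HasSum b 1 := pker_hasSum α lam hα0 hαlam hlam1 ν hν0 hνs hν1 j
    have han : ∀ k, 0 ≤ a k := fun k => pker_nonneg α lam hα0 hlam1 μ i k
    have hbn : ∀ k, 0 ≤ b k := fun k => pker_nonneg α lam hα0 hlam1 ν j k
    have hmn : ∀ k, 0 ≤ min (a k) (b k) := fun k => le_min (han k) (hbn k)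
    have hms : Summable (fun k => min (a k) (b k)) :=
      Summable.of_nonneg_of_le hmn (fun k => min_le_left _ _) hau.summable
    have habs : ∀ k, |a k - b k| = a k + b k - 2 * min (a k) (b k) := by
      intro k
      rcases le_total (a k) (b k) with h | h
      · rw [min_eq_left h, abs_of_nonpos (by linarith)]; ring
      · rw [min_eq_right h, abs_of_nonneg (by linarith)]; ring
    have hsum : HasSum (fun k => |a k - b k|)
        (1 + 1 - 2 * ∑' k, min (a k) (b k)) := by
      have := (hau.add hbu).sub (hms.hasSum.mul_left 2)
      exact this.congr_fun habs
    rw [hsum.tsum_eq]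
    have h1 : α ≤ min (a 1) (b 1) := by
      apply le_min
      · simp [ha, pker]
      · simp [hb, pker]
    have h2 : min (a 1) (b 1) ≤ ∑' k, min (a k) (b k) :=
      Summable.le_tsum hms 1 (fun k _ => hmn k)
    linarith
end

section
/- Fix 0 < α < λ ≤ 1 and consider the nonlinear Markov transition kernel on ℕ defined by P_ν(i,1) = (λ ν({1})) ∨ α and, for j ≠ 1, P_ν(i,j) = ((λ ν({1,…,j}) − α) ∧ λ ν({j})) ∨ 0 + (1 − λ)·𝟙(j = i + 1). Then for every i ∈ ℕ and all μ, ν ∈ 𝒫(ℕ), Σ_{j=1}^∞ |P_ν(i,j) − P_μ(i,j)| ≤ λ Σ_{j=1}^∞ |μ({j}) − ν({j})|, i.e. the family satisfies the measure-Lipschitz condition with constant λ. -/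
private lemma max_shift (x α : ℝ) : max x α = α + max (x - α) 0 := by
  rcases max_cases x α with ⟨e1,h1⟩|⟨e1,h1⟩ <;>
  rcases max_cases (x - α) 0 with ⟨e2,h2⟩|⟨e2,h2⟩ <;> linarith

private lemma tele_aux (α X Y : ℝ) (hYX : Y ≤ X) :
    max (min (X - α) (X - Y)) 0 = max (X - α) 0 - max (Y - α) 0 := by
  rcases min_cases (X - α) (X - Y) with ⟨e,h⟩|⟨e,h⟩ <;>
  rcases max_cases (min (X - α) (X - Y)) 0 with ⟨e0,h0⟩|⟨e0,h0⟩ <;>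
  rcases max_cases (X - α) 0 with ⟨e1,h1⟩|⟨e1,h1⟩ <;>
  rcases max_cases (Y - α) 0 with ⟨e2,h2⟩|⟨e2,h2⟩ <;> linarith

private lemma lip_aux (α x y : ℝ) : |max (x - α) 0 - max (y - α) 0| ≤ |x - y| := by
  rcases max_cases (x - α) 0 with ⟨e1,h1⟩|⟨e1,h1⟩ <;>
  rcases max_cases (y - α) 0 with ⟨e2,h2⟩|⟨e2,h2⟩ <;>
  rcases abs_cases (max (x - α) 0 - max (y - α) 0) with ⟨f1,g1⟩|⟨f1,g1⟩ <;>
  rcases abs_cases (x - y) with ⟨f2,g2⟩|⟨f2,g2⟩ <;> linarith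

set_option maxHeartbeats 2000000 in
private lemma key_ineq (α A B A' B' : ℝ) (hAB : A ≤ B) (hA'B' : A' ≤ B') :
    |(max (B' - α) 0 - max (B - α) 0) - (max (A' - α) 0 - max (A - α) 0)|
      + |max (A' - α) 0 - max (A - α) 0| - |max (B' - α) 0 - max (B - α) 0|
    ≤ |(B' - A') - (B - A)| + |A' - A| - |B' - B| := by
  rcases max_cases (A - α) 0 with ⟨e1,h1⟩|⟨e1,h1⟩ <;>
  rcases max_cases (A' - α) 0 with ⟨e2,h2⟩|⟨e2,h2⟩ <;>
  rcases max_cases (B - α) 0 with ⟨e3,h3⟩|⟨e3,h3⟩ <;>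
  rcases max_cases (B' - α) 0 with ⟨e4,h4⟩|⟨e4,h4⟩ <;>
  rcases abs_cases ((max (B' - α) 0 - max (B - α) 0) - (max (A' - α) 0 - max (A - α) 0)) with ⟨f1,g1⟩|⟨f1,g1⟩ <;>
  rcases abs_cases (max (A' - α) 0 - max (A - α) 0) with ⟨f2,g2⟩|⟨f2,g2⟩ <;>
  rcases abs_cases (B' - B) with ⟨f6,g6⟩|⟨f6,g6⟩ <;>
  linarith [le_abs_self (max (B' - α) 0 - max (B - α) 0),
    neg_abs_le (max (B' - α) 0 - max (B - α) 0),
    le_abs_self ((B' - A') - (B - A)), neg_abs_le ((B' - A') - (B - A)),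
    le_abs_self (A' - A), neg_abs_le (A' - A)]

private lemma pnat_Iio_one : Finset.Iio (1 : ℕ+) = ∅ := by
  ext k
  simp only [Finset.mem_Iio, Finset.notMem_empty, iff_false, not_lt]
  exact k.one_le

private lemma pnat_Iio_succ (n : ℕ+) : Finset.Iio (n + 1) = Finset.Iic n := by
  ext k
  simp [Finset.mem_Iio, Finset.mem_Iic, PNat.lt_add_one_iff]

private lemma pnat_Iic_insert (n : ℕ+) :
    Finset.Iic (n + 1) = insert (n + 1) (Finset.Iic n) := by
  rw [← Finset.Iio_insert, pnat_Iio_succ]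

private lemma pnat_Iic_one : Finset.Iic (1 : ℕ+) = {1} := by
  ext k
  simp [Finset.mem_Iic, PNat.le_one_iff]

private noncomputable def Eaux (α lam : ℝ) (μ ν : ℕ+ → ℝ) (s : Finset ℕ+) : ℝ :=
  max (lam * ∑ k ∈ s, ν k - α) 0 - max (lam * ∑ k ∈ s, μ k - α) 0

private lemma abs_lam_mul (lam a b : ℝ) (h : 0 < lam) :
    |lam * a - lam * b| = lam * |a - b| := by
  rw [← mul_sub, abs_mul, abs_of_pos h]

/-- For `0 < α < lam ≤ 1`, the counterexample kernel on `ℕ+` satisfies the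
measure-Lipschitz condition with constant `lam`:
`Σ_j |P_ν(i,j) − P_μ(i,j)| ≤ lam Σ_j |μ({j}) − ν({j})|`. -/
theorem stmt14 (α lam : ℝ) (hα0 : 0 < α) (hαlam : α < lam) (hlam1 : lam ≤ 1)
    (μ ν : ℕ+ → ℝ) (hμ0 : ∀ k, 0 ≤ μ k) (hμs : Summable μ) (hμ1 : ∑' k, μ k = 1)
    (hν0 : ∀ k, 0 ≤ ν k) (hνs : Summable ν) (hν1 : ∑' k, ν k = 1) :
    ∀ i : ℕ+, ∑' j, |pker α lam ν i j - pker α lam μ i j| ≤ lam * ∑' j, |μ j - ν j| := by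
  intro i
  have hlam0 : 0 < lam := hα0.trans hαlam
  have hsum : ∀ (f : ℕ+ → ℝ) (j : ℕ+),
      ∑ k ∈ Finset.Iic j, f k = ∑ k ∈ Finset.Iio j, f k + f j := by
    intro f j
    rw [← Finset.Iio_insert, Finset.sum_insert (by simp)]
    ring
  -- E at Iio 1 vanishes
  have hE0 : Eaux α lam μ ν (Finset.Iio 1) = 0 := by
    rw [pnat_Iio_one, Eaux]
    simp only [Finset.sum_empty, mul_zero, zero_sub]
    rw [max_eq_right (by linarith : -α ≤ 0)]
    ring
  -- pointwise identity
  have claim1 : ∀ j : ℕ+, pker α lam ν i j - pker α lam μ i j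
      = Eaux α lam μ ν (Finset.Iic j) - Eaux α lam μ ν (Finset.Iio j) := by
    intro j
    by_cases hj : j = 1
    · subst hj
      have hp : ∀ f : ℕ+ → ℝ, pker α lam f i 1 = max (lam * f 1) α := by
        intro f; simp [pker]
      have hs1 : ∀ f : ℕ+ → ℝ, ∑ k ∈ Finset.Iic (1:ℕ+), f k = f 1 := by
        intro f; rw [pnat_Iic_one, Finset.sum_singleton]
      rw [hp, hp, hE0, Eaux, hs1, hs1, max_shift (lam * ν 1) α, max_shift (lam * μ 1) α]
      ring
    · have hp : ∀ f : ℕ+ → ℝ, pker α lam f i j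
          = max (min (lam * ∑ k ∈ Finset.Iic j, f k - α) (lam * f j)) 0
            + (if j = i + 1 then 1 - lam else 0) := by
        intro f; simp [pker, hj]
      have hident : ∀ f : ℕ+ → ℝ, (∀ k, 0 ≤ f k) →
          max (min (lam * ∑ k ∈ Finset.Iic j, f k - α) (lam * f j)) 0
            = max (lam * ∑ k ∈ Finset.Iic j, f k - α) 0
              - max (lam * ∑ k ∈ Finset.Iio j, f k - α) 0 := by
        intro f hf
        have h1 : lam * f j
            = lam * ∑ k ∈ Finset.Iic j, f k - lam * ∑ k ∈ Finset.Iio j, f k := by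
          rw [hsum f j]; ring
        rw [h1]
        exact tele_aux α _ _ (by rw [hsum f j]; nlinarith [hf j])
      rw [hp, hp, hident ν hν0, hident μ hμ0]
      simp only [Eaux]
      ring
  -- Lipschitz bound
  have claim2 : ∀ s : Finset ℕ+,
      |Eaux α lam μ ν s| ≤ lam * |∑ k ∈ s, ν k - ∑ k ∈ s, μ k| := by
    intro s
    rw [← abs_lam_mul lam _ _ hlam0, Eaux]
    exact lip_aux α _ _
  -- key step inequality
  have claim3 : ∀ j : ℕ+,
      |Eaux α lam μ ν (Finset.Iic j) - Eaux α lam μ ν (Finset.Iio j)|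
        + |Eaux α lam μ ν (Finset.Iio j)| - |Eaux α lam μ ν (Finset.Iic j)|
      ≤ lam * |μ j - ν j|
        + lam * |∑ k ∈ Finset.Iio j, ν k - ∑ k ∈ Finset.Iio j, μ k|
        - lam * |∑ k ∈ Finset.Iic j, ν k - ∑ k ∈ Finset.Iic j, μ k| := by
    intro j
    have hAB : lam * ∑ k ∈ Finset.Iio j, μ k ≤ lam * ∑ k ∈ Finset.Iic j, μ k := by
      rw [hsum μ j]; nlinarith [hμ0 j]
    have hA'B' : lam * ∑ k ∈ Finset.Iio j, ν k ≤ lam * ∑ k ∈ Finset.Iic j, ν k := by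
      rw [hsum ν j]; nlinarith [hν0 j]
    have hk := key_ineq α (lam * ∑ k ∈ Finset.Iio j, μ k) (lam * ∑ k ∈ Finset.Iic j, μ k)
      (lam * ∑ k ∈ Finset.Iio j, ν k) (lam * ∑ k ∈ Finset.Iic j, ν k) hAB hA'B'
    have e1 : (lam * ∑ k ∈ Finset.Iic j, ν k - lam * ∑ k ∈ Finset.Iio j, ν k)
        - (lam * ∑ k ∈ Finset.Iic j, μ k - lam * ∑ k ∈ Finset.Iio j, μ k)
        = lam * ν j - lam * μ j := by
      rw [hsum ν j, hsum μ j]; ring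
    rw [e1] at hk
    have e2 : |lam * ν j - lam * μ j| = lam * |μ j - ν j| := by
      rw [abs_lam_mul lam _ _ hlam0, abs_sub_comm]
    have e3 := abs_lam_mul lam (∑ k ∈ Finset.Iio j, ν k) (∑ k ∈ Finset.Iio j, μ k) hlam0
    have e4 := abs_lam_mul lam (∑ k ∈ Finset.Iic j, ν k) (∑ k ∈ Finset.Iic j, μ k) hlam0
    rw [e2, e3, e4] at hk
    simpa [Eaux] using hk
  -- main induction
  have main : ∀ N : ℕ+,
      (∑ j ∈ Finset.Iic N, |Eaux α lam μ ν (Finset.Iic j) - Eaux α lam μ ν (Finset.Iio j)|)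
        + lam * |∑ k ∈ Finset.Iic N, ν k - ∑ k ∈ Finset.Iic N, μ k|
        - |Eaux α lam μ ν (Finset.Iic N)|
      ≤ lam * ∑ j ∈ Finset.Iic N, |μ j - ν j| := by
    intro N
    induction N using PNat.recOn with
    | one =>
      have h3 := claim3 1
      rw [hE0] at h3
      simp only [abs_zero, add_zero, sub_zero] at h3
      have hg0 : (∑ k ∈ Finset.Iio (1:ℕ+), ν k) - ∑ k ∈ Finset.Iio (1:ℕ+), μ k = 0 := by
        rw [pnat_Iio_one]; simp
      rw [hg0] at h3
      simp only [abs_zero, mul_zero, add_zero] at h3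
      have hs1 : (∑ j ∈ Finset.Iic (1:ℕ+),
          |Eaux α lam μ ν (Finset.Iic j) - Eaux α lam μ ν (Finset.Iio j)|)
          = |Eaux α lam μ ν (Finset.Iic 1) - Eaux α lam μ ν (Finset.Iio 1)| := by
        rw [pnat_Iic_one, Finset.sum_singleton, pnat_Iic_one]
      have hs2 : (∑ j ∈ Finset.Iic (1:ℕ+), |μ j - ν j|) = |μ 1 - ν 1| := by
        rw [pnat_Iic_one, Finset.sum_singleton]
      rw [hs1, hs2, hE0, sub_zero]
      linarith [h3]
    | succ n ih =>
      have hnotmem : (n + 1 : ℕ+) ∉ Finset.Iic n := by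
        simp only [Finset.mem_Iic, not_le]
        exact PNat.lt_add_one_iff.mpr le_rfl
      have h3 := claim3 (n + 1)
      rw [pnat_Iio_succ] at h3
      have hs1 : (∑ j ∈ Finset.Iic (n+1),
          |Eaux α lam μ ν (Finset.Iic j) - Eaux α lam μ ν (Finset.Iio j)|)
          = |Eaux α lam μ ν (Finset.Iic (n+1)) - Eaux α lam μ ν (Finset.Iio (n+1))|
            + ∑ j ∈ Finset.Iic n,
                |Eaux α lam μ ν (Finset.Iic j) - Eaux α lam μ ν (Finset.Iio j)| := by
        rw [pnat_Iic_insert, Finset.sum_insert hnotmem, pnat_Iic_insert]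
      have hs2 : (∑ j ∈ Finset.Iic (n+1), |μ j - ν j|)
          = |μ (n+1) - ν (n+1)| + ∑ j ∈ Finset.Iic n, |μ j - ν j| := by
        rw [pnat_Iic_insert, Finset.sum_insert hnotmem]
      rw [hs1, hs2, pnat_Iio_succ]
      linarith [h3, ih]
  -- assemble
  have hrw : ∀ j : ℕ+, |pker α lam ν i j - pker α lam μ i j|
      = |Eaux α lam μ ν (Finset.Iic j) - Eaux α lam μ ν (Finset.Iio j)| :=
    fun j => by rw [claim1 j]
  rw [tsum_congr hrw]
  have hes : Summable fun j : ℕ+ => |μ j - ν j| := (hμs.sub hνs).abs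
  have htne : (0:ℝ) ≤ lam * ∑' j : ℕ+, |μ j - ν j| :=
    mul_nonneg hlam0.le (tsum_nonneg fun _ => abs_nonneg _)
  apply tsum_le_of_sum_le' htne
  intro u
  have hsub : u ⊆ Finset.Iic (u.sup id) := by
    intro a ha
    simp only [Finset.mem_Iic]
    exact Finset.le_sup (f := id) ha
  calc ∑ j ∈ u, |Eaux α lam μ ν (Finset.Iic j) - Eaux α lam μ ν (Finset.Iio j)|
      ≤ ∑ j ∈ Finset.Iic (u.sup id),
          |Eaux α lam μ ν (Finset.Iic j) - Eaux α lam μ ν (Finset.Iio j)| :=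
        Finset.sum_le_sum_of_subset_of_nonneg hsub (fun _ _ _ => abs_nonneg _)
    _ ≤ lam * ∑ j ∈ Finset.Iic (u.sup id), |μ j - ν j| := by
        linarith [main (u.sup id), claim2 (Finset.Iic (u.sup id))]
    _ ≤ lam * ∑' j : ℕ+, |μ j - ν j| := by
        apply mul_le_mul_of_nonneg_left _ hlam0.le
        exact Summable.sum_le_tsum _ (fun _ _ => abs_nonneg _) hes
end

section
/- Let μ and ν be probability measures on a measurable space (E,ℰ) and let c ≥ 0. Suppose that ν(A)² ≤ e^c μ(A) and μ(A)² ≤ e^c ν(A) for every A ∈ ℰ. Then |μ(A) − ν(A)| ≤ 1 − min(e^{−c}, 1/2) for every A ∈ ℰ, and consequently d_TV(μ,ν) ≤ 2 − 2 min(e^{−c}, 1/2). -/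
open MeasureTheory

private lemma key_ineq_s18 (a t : ℝ) (ha : 0 < a) (ha1 : a ≤ 1) (ht : 0 ≤ t) (ht1 : t ≤ 1) :
    t - a * t ^ 2 ≤ 1 - min a (1 / 2) := by
  rcases le_total a (1 / 2) with h | h
  · rw [min_eq_left h]
    nlinarith [mul_nonneg (sub_nonneg.2 ht1) (sub_nonneg.2 ht1)]
  · rw [min_eq_right h]
    nlinarith [sq_nonneg (2 * a * t - 1)]

/-- Total variation distance: `d_TV(μ,ν) = 2 ⨆_{A measurable} |μ(A) − ν(A)|`. -/
noncomputable def dTV {E : Type*} [MeasurableSpace E] (μ ν : Measure E) : ℝ :=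
  2 * ⨆ A : {A : Set E // MeasurableSet A}, |(μ A.1).toReal - (ν A.1).toReal|

/-- From a two-sided Harnack-type inequality `ν(A)² ≤ e^c μ(A)`, `μ(A)² ≤ e^c ν(A)` one
deduces `|μ(A) − ν(A)| ≤ 1 − min(e^{−c}, 1/2)` for every measurable `A`, and hence
`d_TV(μ,ν) ≤ 2 − 2 min(e^{−c}, 1/2)`. -/
theorem stmt18 {E : Type*} [MeasurableSpace E]
    (μ ν : Measure E) (hμ : IsProbabilityMeasure μ) (hν : IsProbabilityMeasure ν)
    (c : ℝ) (hc : 0 ≤ c)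
    (h1 : ∀ A : Set E, MeasurableSet A → ((ν A).toReal) ^ 2 ≤ Real.exp c * (μ A).toReal)
    (h2 : ∀ A : Set E, MeasurableSet A → ((μ A).toReal) ^ 2 ≤ Real.exp c * (ν A).toReal) :
    (∀ A : Set E, MeasurableSet A →
      |(μ A).toReal - (ν A).toReal| ≤ 1 - min (Real.exp (-c)) (1 / 2)) ∧
    dTV μ ν ≤ 2 - 2 * min (Real.exp (-c)) (1 / 2) := by
  have hec : (0:ℝ) < Real.exp (-c) := Real.exp_pos _
  have hec1 : Real.exp (-c) ≤ 1 := Real.exp_le_one_iff.2 (by linarith)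
  have hmain : ∀ A : Set E, MeasurableSet A →
      |(μ A).toReal - (ν A).toReal| ≤ 1 - min (Real.exp (-c)) (1 / 2) := by
    intro A hA
    set p := (μ A).toReal with hp
    set q := (ν A).toReal with hq
    have hp0 : 0 ≤ p := ENNReal.toReal_nonneg
    have hq0 : 0 ≤ q := ENNReal.toReal_nonneg
    have hp1 : p ≤ 1 := by
      simpa using ENNReal.toReal_mono (by simp : (1:ENNReal) ≠ ⊤) (prob_le_one (μ := μ) (s := A))
    have hq1 : q ≤ 1 := by
      simpa using ENNReal.toReal_mono (by simp : (1:ENNReal) ≠ ⊤) (prob_le_one (μ := ν) (s := A))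
    have hpc : (μ Aᶜ).toReal = 1 - p := by
      rw [prob_compl_eq_one_sub hA,
        ENNReal.toReal_sub_of_le prob_le_one (by simp), ENNReal.toReal_one]
    have hqc : (ν Aᶜ).toReal = 1 - q := by
      rw [prob_compl_eq_one_sub hA,
        ENNReal.toReal_sub_of_le prob_le_one (by simp), ENNReal.toReal_one]
    -- q ≥ e^{-c} p^2
    have e1 : Real.exp (-c) * p ^ 2 ≤ q := by
      have := h2 A hA
      have hx : Real.exp (-c) * Real.exp c = 1 := by
        rw [← Real.exp_add]; simp
      nlinarith [mul_le_mul_of_nonneg_left this (le_of_lt hec)]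
    -- 1 - q ≥ e^{-c} (1-p)^2
    have e2 : Real.exp (-c) * (1 - p) ^ 2 ≤ 1 - q := by
      have := h2 Aᶜ hA.compl
      rw [hpc, hqc] at this
      have hx : Real.exp (-c) * Real.exp c = 1 := by
        rw [← Real.exp_add]; simp
      nlinarith [mul_le_mul_of_nonneg_left this (le_of_lt hec)]
    rw [abs_sub_le_iff]
    constructor
    · have := key_ineq_s18 (Real.exp (-c)) p hec hec1 hp0 hp1
      linarith
    · have := key_ineq_s18 (Real.exp (-c)) (1 - p) hec hec1 (by linarith) (by linarith)
      linarith
  refine ⟨hmain, ?_⟩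
  unfold dTV
  have hsup : (⨆ A : {A : Set E // MeasurableSet A}, |(μ A.1).toReal - (ν A.1).toReal|)
      ≤ 1 - min (Real.exp (-c)) (1 / 2) := by
    apply Real.iSup_le
    · intro A
      exact hmain A.1 A.2
    · have : min (Real.exp (-c)) (1 / 2) ≤ 1 / 2 := min_le_right _ _
      linarith
  linarith
end

section
/- Let Q and R be Markov transition kernels on a measurable space (E,ℰ) and let μ, ν be probability measures on E. Then d_TV(Qμ, Rν) ≤ (2 − d_TV(μ,ν)) · sup_{x∈E} d_TV(Q δ_x, R δ_x) + d_TV(μ,ν). -/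
open MeasureTheory ProbabilityTheory

section Aux

variable {E : Type*} [MeasurableSpace E]

lemma dTV_nonneg (μ ν : Measure E) : 0 ≤ dTV μ ν := by
  have h : 0 ≤ ⨆ A : {A : Set E // MeasurableSet A}, |(μ A.1).toReal - (ν A.1).toReal| :=
    Real.iSup_nonneg fun A => abs_nonneg _
  unfold dTV; linarith

lemma dTV_le_of_forall (μ ν : Measure E) (c : ℝ) (hc : 0 ≤ c)
    (h : ∀ A : {A : Set E // MeasurableSet A}, |(μ A.1).toReal - (ν A.1).toReal| ≤ c) :
    dTV μ ν ≤ 2 * c := by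
  have h2 : (⨆ A : {A : Set E // MeasurableSet A}, |(μ A.1).toReal - (ν A.1).toReal|) ≤ c :=
    Real.iSup_le h hc
  unfold dTV; linarith

lemma bddAbove_dTV_fam (μ ν : Measure E) [IsProbabilityMeasure μ] [IsProbabilityMeasure ν] :
    BddAbove (Set.range fun A : {A : Set E // MeasurableSet A} =>
      |(μ A.1).toReal - (ν A.1).toReal|) := by
  refine ⟨1, ?_⟩
  rintro x ⟨B, rfl⟩
  have h1 : (μ B.1).toReal ≤ 1 := by
    simpa using ENNReal.toReal_mono ENNReal.one_ne_top (prob_le_one (μ := μ) (s := B.1))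
  have h2 : (ν B.1).toReal ≤ 1 := by
    simpa using ENNReal.toReal_mono ENNReal.one_ne_top (prob_le_one (μ := ν) (s := B.1))
  have h3 : 0 ≤ (μ B.1).toReal := ENNReal.toReal_nonneg
  have h4 : 0 ≤ (ν B.1).toReal := ENNReal.toReal_nonneg
  rw [abs_sub_le_iff]; constructor <;> linarith

lemma abs_le_dTV (μ ν : Measure E) [IsProbabilityMeasure μ] [IsProbabilityMeasure ν]
    {A : Set E} (hA : MeasurableSet A) :
    2 * |(μ A).toReal - (ν A).toReal| ≤ dTV μ ν := by
  have h := le_ciSup (bddAbove_dTV_fam μ ν) (⟨A, hA⟩ : {A : Set E // MeasurableSet A})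
  unfold dTV; linarith

lemma dTV_le_two (μ ν : Measure E) [IsProbabilityMeasure μ] [IsProbabilityMeasure ν] :
    dTV μ ν ≤ 2 := by
  have h := dTV_le_of_forall μ ν 1 one_pos.le (fun B => ?_)
  · linarith
  · have h1 : (μ B.1).toReal ≤ 1 := by
      simpa using ENNReal.toReal_mono ENNReal.one_ne_top (prob_le_one (μ := μ) (s := B.1))
    have h2 : (ν B.1).toReal ≤ 1 := by
      simpa using ENNReal.toReal_mono ENNReal.one_ne_top (prob_le_one (μ := ν) (s := B.1))
    have h3 : 0 ≤ (μ B.1).toReal := ENNReal.toReal_nonneg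
    have h4 : 0 ≤ (ν B.1).toReal := ENNReal.toReal_nonneg
    rw [abs_sub_le_iff]; constructor <;> linarith

end Aux

/-- For Markov kernels `Q`, `R` and probability measures `μ`, `ν`:
`d_TV(Qμ, Rν) ≤ (2 − d_TV(μ,ν)) · sup_x d_TV(Qδ_x, Rδ_x) + d_TV(μ,ν)`. -/
theorem stmt19 {E : Type*} [MeasurableSpace E]
    (Q R : Kernel E E) (hQ : IsMarkovKernel Q) (hR : IsMarkovKernel R)
    (μ ν : Measure E) (hμ : IsProbabilityMeasure μ) (hν : IsProbabilityMeasure ν) :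
    dTV (μ.bind ⇑Q) (ν.bind ⇑R)
      ≤ (2 - dTV μ ν) * (⨆ x : E, dTV (Q x) (R x)) + dTV μ ν := by
  classical
  set d : ℝ := dTV μ ν with hd_def
  set S : ℝ := ⨆ x : E, dTV (Q x) (R x) with hS_def
  have hd0 : 0 ≤ d := dTV_nonneg μ ν
  have hd2 : d ≤ 2 := dTV_le_two μ ν
  have hS0 : 0 ≤ S := Real.iSup_nonneg fun x => dTV_nonneg _ _
  have hSbdd : BddAbove (Set.range fun x : E => dTV (Q x) (R x)) := by
    refine ⟨2, ?_⟩; rintro y ⟨x, rfl⟩; exact dTV_le_two _ _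
  -- pointwise bound from S
  have key : ∀ (x : E) (A : Set E), MeasurableSet A →
      |(Q x A).toReal - (R x A).toReal| ≤ S / 2 := by
    intro x A hA
    have h1 : 2 * |(Q x A).toReal - (R x A).toReal| ≤ dTV (Q x) (R x) := abs_le_dTV _ _ hA
    have h2 : dTV (Q x) (R x) ≤ S := le_ciSup hSbdd x
    linarith
  -- Hahn decomposition
  obtain ⟨s, hs, hss, hsc⟩ := hahn_decomposition (μ := μ) (ν := ν)
  set p : ℝ := (μ s).toReal with hp_def
  set q : ℝ := (ν s).toReal with hq_def
  have hqp : q ≤ p := ENNReal.toReal_mono (measure_ne_top μ s) (hss s hs subset_rfl)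
  have hp1 : p ≤ 1 := by
    rw [hp_def]
    simpa using ENNReal.toReal_mono ENNReal.one_ne_top (prob_le_one (μ := μ) (s := s))
  have hq0 : 0 ≤ q := ENNReal.toReal_nonneg
  have hμsc : (μ sᶜ).toReal = 1 - p := by
    rw [prob_compl_eq_one_sub hs, ENNReal.toReal_sub_of_le prob_le_one ENNReal.one_ne_top]
    simp [hp_def]
  have hνsc : (ν sᶜ).toReal = 1 - q := by
    rw [prob_compl_eq_one_sub hs, ENNReal.toReal_sub_of_le prob_le_one ENNReal.one_ne_top]
    simp [hq_def]
  -- p - q ≤ d / 2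
  have hpq_le : p - q ≤ d / 2 := by
    have h := abs_le_dTV μ ν hs
    have h2 : (μ s).toReal - (ν s).toReal ≤ |(μ s).toReal - (ν s).toReal| := le_abs_self _
    rw [hp_def, hq_def]
    linarith
  -- d ≤ 2 (p - q)
  have hd_le : d ≤ 2 * (p - q) := by
    refine dTV_le_of_forall μ ν (p - q) (by linarith) (fun B => ?_)
    have e1 : (μ (B.1 \ s)).toReal ≤ (ν (B.1 \ s)).toReal :=
      ENNReal.toReal_mono (measure_ne_top _ _) (hsc _ (B.2.diff hs) (fun x hx => hx.2))
    have e2 : (ν (s \ B.1)).toReal ≤ (μ (s \ B.1)).toReal :=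
      ENNReal.toReal_mono (measure_ne_top _ _) (hss _ (hs.diff B.2) Set.diff_subset)
    have e3 : (μ (sᶜ \ B.1)).toReal ≤ (ν (sᶜ \ B.1)).toReal :=
      ENNReal.toReal_mono (measure_ne_top _ _) (hsc _ (hs.compl.diff B.2) Set.diff_subset)
    have e4 : (ν (B.1 ∩ s)).toReal ≤ (μ (B.1 ∩ s)).toReal :=
      ENNReal.toReal_mono (measure_ne_top _ _) (hss _ (B.2.inter hs) Set.inter_subset_right)
    have hic : s ∩ B.1 = B.1 ∩ s := Set.inter_comm _ _
    have hic2 : sᶜ ∩ B.1 = B.1 \ s := by rw [Set.inter_comm, Set.diff_eq]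
    have tmuB : (μ B.1).toReal = (μ (B.1 ∩ s)).toReal + (μ (B.1 \ s)).toReal := by
      rw [← measure_inter_add_diff B.1 hs (μ := μ),
        ENNReal.toReal_add (measure_ne_top _ _) (measure_ne_top _ _)]
    have tnuB : (ν B.1).toReal = (ν (B.1 ∩ s)).toReal + (ν (B.1 \ s)).toReal := by
      rw [← measure_inter_add_diff B.1 hs (μ := ν),
        ENNReal.toReal_add (measure_ne_top _ _) (measure_ne_top _ _)]
    have tmus : p = (μ (B.1 ∩ s)).toReal + (μ (s \ B.1)).toReal := by
      rw [hp_def, ← measure_inter_add_diff s B.2 (μ := μ),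
        ENNReal.toReal_add (measure_ne_top _ _) (measure_ne_top _ _), hic]
    have tnus : q = (ν (B.1 ∩ s)).toReal + (ν (s \ B.1)).toReal := by
      rw [hq_def, ← measure_inter_add_diff s B.2 (μ := ν),
        ENNReal.toReal_add (measure_ne_top _ _) (measure_ne_top _ _), hic]
    have tmusc : (1 : ℝ) - p = (μ (B.1 \ s)).toReal + (μ (sᶜ \ B.1)).toReal := by
      rw [← hμsc, ← measure_inter_add_diff sᶜ B.2 (μ := μ),
        ENNReal.toReal_add (measure_ne_top _ _) (measure_ne_top _ _), hic2]
    have tnusc : (1 : ℝ) - q = (ν (B.1 \ s)).toReal + (ν (sᶜ \ B.1)).toReal := by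
      rw [← hνsc, ← measure_inter_add_diff sᶜ B.2 (μ := ν),
        ENNReal.toReal_add (measure_ne_top _ _) (measure_ne_top _ _), hic2]
    rw [abs_sub_le_iff]
    constructor <;> [skip; skip] <;> linarith
  -- Decompositions of μ and ν
  have hleσ : ν.restrict s ≤ μ.restrict s := by
    rw [Measure.le_iff]
    intro t ht
    rw [Measure.restrict_apply ht, Measure.restrict_apply ht]
    exact hss _ (ht.inter hs) Set.inter_subset_right
  have hleρ : μ.restrict sᶜ ≤ ν.restrict sᶜ := by
    rw [Measure.le_iff]
    intro t ht
    rw [Measure.restrict_apply ht, Measure.restrict_apply ht]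
    exact hsc _ (ht.inter hs.compl) Set.inter_subset_right
  set σ : Measure E := μ.restrict s - ν.restrict s with hσ_def
  set ρ : Measure E := ν.restrict sᶜ - μ.restrict sᶜ with hρ_def
  have hσadd : σ + ν.restrict s = μ.restrict s := Measure.sub_add_cancel_of_le hleσ
  have hρadd : ρ + μ.restrict sᶜ = ν.restrict sᶜ := Measure.sub_add_cancel_of_le hleρ
  have hμdec : μ = σ + ν.restrict s + μ.restrict sᶜ := by
    rw [hσadd, Measure.restrict_add_restrict_compl hs]
  have hνdec : ν = ρ + μ.restrict sᶜ + ν.restrict s := by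
    rw [hρadd, add_comm, Measure.restrict_add_restrict_compl hs]
  have hσuniv : σ Set.univ ≤ ENNReal.ofReal (d / 2) := by
    have h1 : σ Set.univ = μ s - ν s := by
      rw [hσ_def, Measure.sub_apply MeasurableSet.univ hleσ,
        Measure.restrict_apply_univ, Measure.restrict_apply_univ]
    rw [h1]
    have h2 : μ s = ENNReal.ofReal p := by rw [hp_def, ENNReal.ofReal_toReal (measure_ne_top _ _)]
    have h3 : ν s = ENNReal.ofReal q := by rw [hq_def, ENNReal.ofReal_toReal (measure_ne_top _ _)]
    rw [h2, h3, ← ENNReal.ofReal_sub _ hq0]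
    exact ENNReal.ofReal_le_ofReal hpq_le
  have hρuniv : ρ Set.univ ≤ ENNReal.ofReal (d / 2) := by
    have h1 : ρ Set.univ = ν sᶜ - μ sᶜ := by
      rw [hρ_def, Measure.sub_apply MeasurableSet.univ hleρ,
        Measure.restrict_apply_univ, Measure.restrict_apply_univ]
    rw [h1]
    have h2 : μ sᶜ = ENNReal.ofReal (1 - p) := by
      rw [← hμsc, ENNReal.ofReal_toReal (measure_ne_top _ _)]
    have h3 : ν sᶜ = ENNReal.ofReal (1 - q) := by
      rw [← hνsc, ENNReal.ofReal_toReal (measure_ne_top _ _)]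
    rw [h2, h3, ← ENNReal.ofReal_sub _ (by linarith : (0:ℝ) ≤ 1 - p)]
    exact ENNReal.ofReal_le_ofReal (by linarith)
  -- the per-set bound
  have main : ∀ B : {A : Set E // MeasurableSet A},
      |((μ.bind ⇑Q) B.1).toReal - ((ν.bind ⇑R) B.1).toReal| ≤ ((2 - d) * S + d) / 2 := by
    rintro ⟨A, hA⟩
    have hQA : (μ.bind ⇑Q) A = ∫⁻ x, Q x A ∂μ := Measure.bind_apply hA Q.measurable.aemeasurable
    have hRA : (ν.bind ⇑R) A = ∫⁻ x, R x A ∂ν := Measure.bind_apply hA R.measurable.aemeasurable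
    set c : ENNReal := ENNReal.ofReal (S / 2) with hc_def
    have hfg : ∀ x, Q x A ≤ R x A + c := by
      intro x
      have h1 := key x A hA
      rw [abs_sub_le_iff] at h1
      have h2 : Q x A = ENNReal.ofReal (Q x A).toReal :=
        (ENNReal.ofReal_toReal (measure_ne_top _ _)).symm
      have h3 : R x A = ENNReal.ofReal (R x A).toReal :=
        (ENNReal.ofReal_toReal (measure_ne_top _ _)).symm
      rw [h2, h3, hc_def, ← ENNReal.ofReal_add ENNReal.toReal_nonneg (by linarith)]
      exact ENNReal.ofReal_le_ofReal (by linarith [h1.1])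
    have hgf : ∀ x, R x A ≤ Q x A + c := by
      intro x
      have h1 := key x A hA
      rw [abs_sub_le_iff] at h1
      have h2 : Q x A = ENNReal.ofReal (Q x A).toReal :=
        (ENNReal.ofReal_toReal (measure_ne_top _ _)).symm
      have h3 : R x A = ENNReal.ofReal (R x A).toReal :=
        (ENNReal.ofReal_toReal (measure_ne_top _ _)).symm
      rw [h2, h3, hc_def, ← ENNReal.ofReal_add ENNReal.toReal_nonneg (by linarith)]
      exact ENNReal.ofReal_le_ofReal (by linarith [h1.2])
    have hbound : ∀ (m : Measure E) (K : Kernel E E), IsMarkovKernel K →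
        ∫⁻ x, K x A ∂m ≤ m Set.univ := by
      intro m K hK
      calc ∫⁻ x, K x A ∂m ≤ ∫⁻ _, 1 ∂m := lintegral_mono fun x => prob_le_one
        _ = m Set.univ := by rw [lintegral_one]
    have hcomp : ∀ (m : Measure E) (K L : Kernel E E), (∀ x, K x A ≤ L x A + c) →
        ∫⁻ x, K x A ∂m ≤ ∫⁻ x, L x A ∂m + c * m Set.univ := by
      intro m K L hpt
      calc ∫⁻ x, K x A ∂m ≤ ∫⁻ x, (L x A + c) ∂m := lintegral_mono hpt
        _ = ∫⁻ x, L x A ∂m + c * m Set.univ := by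
            rw [lintegral_add_right _ measurable_const, lintegral_const]
    set KK : ENNReal := c * (ν s + μ sᶜ) + ENNReal.ofReal (d / 2) with hK_def
    have hμQ : ∫⁻ x, Q x A ∂μ = ∫⁻ x, Q x A ∂σ + ∫⁻ x, Q x A ∂(ν.restrict s)
        + ∫⁻ x, Q x A ∂(μ.restrict sᶜ) := by
      conv_lhs => rw [hμdec]
      rw [lintegral_add_measure, lintegral_add_measure]
    have hνR : ∫⁻ x, R x A ∂ν = ∫⁻ x, R x A ∂ρ + ∫⁻ x, R x A ∂(μ.restrict sᶜ)
        + ∫⁻ x, R x A ∂(ν.restrict s) := by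
      conv_lhs => rw [hνdec]
      rw [lintegral_add_measure, lintegral_add_measure]
    have ineq1 : ∫⁻ x, Q x A ∂μ ≤ ∫⁻ x, R x A ∂ν + KK := by
      rw [hμQ, hνR, hK_def]
      have t1 : ∫⁻ x, Q x A ∂σ ≤ ENNReal.ofReal (d / 2) :=
        le_trans (hbound σ Q hQ) hσuniv
      have t2 : ∫⁻ x, Q x A ∂(ν.restrict s)
          ≤ ∫⁻ x, R x A ∂(ν.restrict s) + c * ν s := by
        have h := hcomp (ν.restrict s) Q R hfg
        rwa [Measure.restrict_apply_univ] at h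
      have t3 : ∫⁻ x, Q x A ∂(μ.restrict sᶜ)
          ≤ ∫⁻ x, R x A ∂(μ.restrict sᶜ) + c * μ sᶜ := by
        have h := hcomp (μ.restrict sᶜ) Q R hfg
        rwa [Measure.restrict_apply_univ] at h
      have step := add_le_add (add_le_add t1 t2) t3
      refine le_trans step ?_
      have heq : ENNReal.ofReal (d / 2) + (∫⁻ x, R x A ∂(ν.restrict s) + c * ν s)
          + (∫⁻ x, R x A ∂(μ.restrict sᶜ) + c * μ sᶜ)
          = (0 : ENNReal) + ∫⁻ x, R x A ∂(μ.restrict sᶜ) + ∫⁻ x, R x A ∂(ν.restrict s)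
            + (c * (ν s + μ sᶜ) + ENNReal.ofReal (d / 2)) := by ring
      rw [heq]
      exact add_le_add_left (add_le_add_left (add_le_add_left (zero_le : (0 : ENNReal) ≤ _) _) _) _
    have ineq2 : ∫⁻ x, R x A ∂ν ≤ ∫⁻ x, Q x A ∂μ + KK := by
      rw [hμQ, hνR, hK_def]
      have t1 : ∫⁻ x, R x A ∂ρ ≤ ENNReal.ofReal (d / 2) :=
        le_trans (hbound ρ R hR) hρuniv
      have t2 : ∫⁻ x, R x A ∂(ν.restrict s)
          ≤ ∫⁻ x, Q x A ∂(ν.restrict s) + c * ν s := by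
        have h := hcomp (ν.restrict s) R Q hgf
        rwa [Measure.restrict_apply_univ] at h
      have t3 : ∫⁻ x, R x A ∂(μ.restrict sᶜ)
          ≤ ∫⁻ x, Q x A ∂(μ.restrict sᶜ) + c * μ sᶜ := by
        have h := hcomp (μ.restrict sᶜ) R Q hgf
        rwa [Measure.restrict_apply_univ] at h
      have step := add_le_add (add_le_add t1 t3) t2
      refine le_trans step ?_
      have heq : ENNReal.ofReal (d / 2) + (∫⁻ x, Q x A ∂(μ.restrict sᶜ) + c * μ sᶜ)
          + (∫⁻ x, Q x A ∂(ν.restrict s) + c * ν s)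
          = (0 : ENNReal) + ∫⁻ x, Q x A ∂(ν.restrict s) + ∫⁻ x, Q x A ∂(μ.restrict sᶜ)
            + (c * (ν s + μ sᶜ) + ENNReal.ofReal (d / 2)) := by ring
      rw [heq]
      exact add_le_add_left (add_le_add_left (add_le_add_left (zero_le : (0 : ENNReal) ≤ _) _) _) _
    -- pass to reals
    have hμQ_fin : ∫⁻ x, Q x A ∂μ ≠ ⊤ :=
      ne_top_of_le_ne_top (measure_ne_top μ Set.univ) (hbound μ Q hQ)
    have hνR_fin : ∫⁻ x, R x A ∂ν ≠ ⊤ :=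
      ne_top_of_le_ne_top (measure_ne_top ν Set.univ) (hbound ν R hR)
    have hK_fin : KK ≠ ⊤ := by
      rw [hK_def]
      exact ENNReal.add_ne_top.2 ⟨ENNReal.mul_ne_top ENNReal.ofReal_ne_top
        (ENNReal.add_ne_top.2 ⟨measure_ne_top _ _, measure_ne_top _ _⟩), ENNReal.ofReal_ne_top⟩
    have hKtoReal : KK.toReal = S / 2 * (q + (1 - p)) + d / 2 := by
      rw [hK_def, ENNReal.toReal_add (ENNReal.mul_ne_top ENNReal.ofReal_ne_top
        (ENNReal.add_ne_top.2 ⟨measure_ne_top _ _, measure_ne_top _ _⟩)) ENNReal.ofReal_ne_top,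
        ENNReal.toReal_mul, ENNReal.toReal_ofReal (by linarith : (0:ℝ) ≤ S / 2),
        ENNReal.toReal_ofReal (by linarith : (0:ℝ) ≤ d / 2),
        ENNReal.toReal_add (measure_ne_top _ _) (measure_ne_top _ _), hμsc, ← hq_def]
    have r1 : ((μ.bind ⇑Q) A).toReal - ((ν.bind ⇑R) A).toReal ≤ KK.toReal := by
      rw [hQA, hRA]
      have h := ENNReal.toReal_mono (ENNReal.add_ne_top.2 ⟨hνR_fin, hK_fin⟩) ineq1
      rw [ENNReal.toReal_add hνR_fin hK_fin] at h
      linarith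
    have r2 : ((ν.bind ⇑R) A).toReal - ((μ.bind ⇑Q) A).toReal ≤ KK.toReal := by
      rw [hQA, hRA]
      have h := ENNReal.toReal_mono (ENNReal.add_ne_top.2 ⟨hμQ_fin, hK_fin⟩) ineq2
      rw [ENNReal.toReal_add hμQ_fin hK_fin] at h
      linarith
    have habs : |((μ.bind ⇑Q) A).toReal - ((ν.bind ⇑R) A).toReal| ≤ KK.toReal := by
      rw [abs_sub_le_iff]; exact ⟨r1, r2⟩
    rw [hKtoReal] at habs
    nlinarith [habs, hpq_le, hd_le, hS0, hp1, hq0, hd0, hd2, hqp]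
  have hfinal := dTV_le_of_forall (μ.bind ⇑Q) (ν.bind ⇑R) (((2 - d) * S + d) / 2)
    (by nlinarith) main
  
  linarith
end
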